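/- arXiv:2010.09862 — 9 statements merged into one kernel-verified Lean document; each statement's English description precedes it below -/
import Mathlib

section
/- For every integer n ≥ 1 and every real number x, the n-th derivative of the inverse tangent function satisfies Dₓⁿ arctan(x) = ((-1)^{n+1} (n-1)! / (1+x²)ⁿ) · Σ_{k=0}^{⌊(n-1)/2⌋} C(n, 2k+1) (-1)ᵏ x^{n-2k-1}. -/
open Complex Finset

lemma re_neg_one_pow (k : ℕ) : ((-1 : ℂ) ^ k).re = (-1 : ℝ) ^ k := by
  rw [show ((-1 : ℂ)) = ((-1 : ℝ) : ℂ) from by norm_num, ← Complex.ofReal_pow,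
    Complex.ofReal_re]

lemma im_neg_one_pow (k : ℕ) : ((-1 : ℂ) ^ k).im = 0 := by
  rw [show ((-1 : ℂ)) = ((-1 : ℝ) : ℂ) from by norm_num, ← Complex.ofReal_pow,
    Complex.ofReal_im]

lemma I_pow_two_mul (k : ℕ) : Complex.I ^ (2 * k) = (((-1 : ℝ) ^ k : ℝ) : ℂ) := by
  rw [pow_mul, Complex.I_sq]; norm_cast

lemma im_I_pow_odd (k : ℕ) : (Complex.I ^ (2 * k + 1)).im = (-1) ^ k := by
  rw [pow_succ, I_pow_two_mul]
  simp [Complex.mul_im, re_neg_one_pow]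

lemma im_I_pow_even (k : ℕ) : (Complex.I ^ (2 * k)).im = 0 := by
  rw [I_pow_two_mul]; simp [im_neg_one_pow]

lemma im_pow_add_I (n : ℕ) (hn : 1 ≤ n) (x : ℝ) :
    (((x : ℂ) + Complex.I) ^ n).im =
      ∑ k ∈ Finset.range ((n - 1) / 2 + 1),
        (n.choose (2 * k + 1) : ℝ) * (-1) ^ k * x ^ (n - 2 * k - 1) := by
  rw [add_comm ((x : ℂ)) Complex.I, add_pow, Complex.im_sum]
  have hterm : ∀ j ∈ Finset.range (n + 1),
      (Complex.I ^ j * (x : ℂ) ^ (n - j) * (n.choose j : ℂ)).im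
        = (n.choose j : ℝ) * (Complex.I ^ j).im * x ^ (n - j) := by
    intro j hj
    have h2 : (Complex.I ^ j * (x : ℂ) ^ (n - j) * (n.choose j : ℂ))
        = ((x ^ (n - j) * (n.choose j : ℝ) : ℝ) : ℂ) * Complex.I ^ j := by
      push_cast; ring
    rw [h2]
    simp [Complex.mul_im, ← Complex.ofReal_pow]
    ring
  rw [Finset.sum_congr rfl hterm]
  rw [← Finset.sum_filter_of_ne (p := fun j => Odd j)
    (by intro j hj h; by_contra hodd
        obtain ⟨t, rfl⟩ := Nat.not_odd_iff_even.mp hodd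
        rw [← two_mul, im_I_pow_even] at h; simp at h)]
  refine Finset.sum_nbij' (fun j => j / 2) (fun k => 2 * k + 1) ?_ ?_ ?_ ?_ ?_
  · intro a ha
    simp only [Finset.mem_filter, Finset.mem_range] at ha ⊢
    obtain ⟨h1, t, rfl⟩ := ha
    omega
  · intro k hk
    simp only [Finset.mem_filter, Finset.mem_range] at hk ⊢
    exact ⟨by omega, ⟨k, by ring⟩⟩
  · intro a ha
    simp only [Finset.mem_filter, Finset.mem_range] at ha
    obtain ⟨h1, t, rfl⟩ := ha
    omega
  · intro k hk; omega
  · intro a ha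
    simp only [Finset.mem_filter, Finset.mem_range] at ha
    obtain ⟨h1, t, rfl⟩ := ha
    have ht : (2 * t + 1) / 2 = t := by omega
    rw [ht, im_I_pow_odd]
    have he : n - (2 * t + 1) = n - 2 * t - 1 := by omega
    rw [he]

lemma deriv_aux (m : ℕ) : iteratedDeriv m (fun x : ℝ => 1 / (1 + x ^ 2)) =
    fun x : ℝ => ((-1 : ℂ) ^ m * (Nat.factorial m : ℂ) *
      ((((x : ℂ) - Complex.I)) ^ (m + 1))⁻¹).im := by
  induction m with
  | zero =>
    funext x
    have hx : ((x : ℂ) - Complex.I) ≠ 0 := by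
      intro h
      have := congrArg Complex.im h
      simp at this
    simp [iteratedDeriv_zero, Complex.inv_im, Complex.normSq_apply]
    ring
  | succ m ih =>
    rw [iteratedDeriv_succ, ih]
    funext x
    have hx : ((x : ℂ) - Complex.I) ≠ 0 := by
      intro h
      have := congrArg Complex.im h
      simp at this
    have h0 : HasDerivAt (fun z : ℂ => z - Complex.I) 1 (x : ℂ) := by
      simpa using (hasDerivAt_id ((x : ℂ))).sub_const Complex.I
    have h1 := h0.pow (m + 1)
    have h2 := h1.inv (pow_ne_zero _ hx)
    have h3 := (h2.const_mul ((-1 : ℂ) ^ m * (Nat.factorial m : ℂ))).comp_ofReal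
    have h4 := Complex.imCLM.hasFDerivAt.comp_hasDerivAt x h3
    have h5 := h4.deriv
    simp only [Function.comp_def, Complex.imCLM_apply, Pi.pow_apply, Pi.inv_apply] at h5
    rw [h5]
    congr 1
    have hp : (((x : ℂ) - Complex.I) ^ (m + 1)) ≠ 0 := pow_ne_zero _ hx
    have hp2 : (((x : ℂ) - Complex.I) ^ (m + 2)) ≠ 0 := pow_ne_zero _ hx
    field_simp
    push_cast [Nat.factorial_succ]
    ring

/-- For every integer `n ≥ 1` and every real `x`,
`Dₓⁿ arctan(x) = ((-1)^(n+1) (n-1)! / (1+x²)ⁿ) · Σ_{k=0}^{⌊(n-1)/2⌋} C(n,2k+1) (-1)ᵏ x^(n-2k-1)`. -/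
theorem iteratedDeriv_arctan_eq_polynomial (n : ℕ) (hn : 1 ≤ n) (x : ℝ) :
    iteratedDeriv n Real.arctan x =
      ((-1) ^ (n + 1) * (Nat.factorial (n - 1) : ℝ) / (1 + x ^ 2) ^ n) *
        ∑ k ∈ Finset.range ((n - 1) / 2 + 1),
          (n.choose (2 * k + 1) : ℝ) * (-1) ^ k * x ^ (n - 2 * k - 1) := by
  obtain ⟨m, rfl⟩ : ∃ m, n = m + 1 := ⟨n - 1, by omega⟩
  rw [iteratedDeriv_succ', Real.deriv_arctan, deriv_aux]
  have hx : ((x : ℂ) - Complex.I) ≠ 0 := by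
    intro h
    have := congrArg Complex.im h
    simp at this
  have hpos : (0 : ℝ) < 1 + x ^ 2 := by positivity
  have hne : ((1 + x ^ 2 : ℝ) : ℂ) ≠ 0 := by
    exact_mod_cast Complex.ofReal_ne_zero.mpr (ne_of_gt hpos)
  have hprod : ((x : ℂ) - Complex.I) * ((x : ℂ) + Complex.I) = ((1 + x ^ 2 : ℝ) : ℂ) := by
    have h := Complex.I_sq
    push_cast
    linear_combination -h
  have hkey : (-1 : ℂ) ^ m * (Nat.factorial m : ℂ) * ((((x : ℂ) - Complex.I)) ^ (m + 1))⁻¹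
      = ((((-1 : ℝ) ^ m * (Nat.factorial m : ℝ) / (1 + x ^ 2) ^ (m + 1)) : ℝ) : ℂ) *
        ((x : ℂ) + Complex.I) ^ (m + 1) := by
    have hP : ((x : ℂ) + Complex.I) ^ (m + 1)
        = ((1 + x ^ 2 : ℝ) : ℂ) ^ (m + 1) * ((((x : ℂ) - Complex.I)) ^ (m + 1))⁻¹ := by
      rw [eq_mul_inv_iff_mul_eq₀ (pow_ne_zero _ hx), ← mul_pow, mul_comm ((x : ℂ) + Complex.I),
        hprod]
    rw [hP, ← mul_assoc]
    congr 1
    push_cast at hne ⊢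
    field_simp
  beta_reduce
  rw [hkey]
  rw [show ((((-1 : ℝ) ^ m * (Nat.factorial m : ℝ) / (1 + x ^ 2) ^ (m + 1)) : ℝ) : ℂ)
      * ((x : ℂ) + Complex.I) ^ (m + 1)
    = ((((-1 : ℝ) ^ m * (Nat.factorial m : ℝ) / (1 + x ^ 2) ^ (m + 1)) : ℝ) : ℂ)
      * ((x : ℂ) + Complex.I) ^ (m + 1) from rfl]
  simp only [Complex.mul_im, Complex.ofReal_re, Complex.ofReal_im, zero_mul, add_zero]
  rw [im_pow_add_I (m + 1) (by omega) x]
  simp only [Nat.add_sub_cancel]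
  ring
end

section
/- For every integer n ≥ 1 and every real number x with |x| < 1, the n-th derivative of the inverse hyperbolic tangent function satisfies Dₓⁿ arctanh(x) = ((n-1)! / (1-x²)ⁿ) · Σ_{k=0}^{⌊(n-1)/2⌋} C(n, 2k+1) x^{n-2k-1}. -/
noncomputable def arctanh (x : ℝ) : ℝ := (1 / 2) * Real.log ((1 + x) / (1 - x))

lemma arctanh_eventuallyEq {x : ℝ} (hx : |x| < 1) :
    arctanh =ᶠ[nhds x] fun y => (1/2) * (Real.log (1 + y) - Real.log (1 - y)) := by
  have hmem : Metric.ball (0:ℝ) 1 ∈ nhds x :=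
    Metric.isOpen_ball.mem_nhds (by simpa [Real.dist_eq] using hx)
  filter_upwards [hmem] with y hy
  have hy' : |y| < 1 := by simpa [Real.dist_eq] using hy
  have h1 : (0:ℝ) < 1 + y := by cases abs_lt.mp hy'; linarith
  have h2 : (0:ℝ) < 1 - y := by cases abs_lt.mp hy'; linarith
  unfold arctanh
  rw [Real.log_div h1.ne' h2.ne']

lemma key (n : ℕ) (hn : 1 ≤ n) : ∀ x : ℝ, |x| < 1 →
    iteratedDeriv n arctanh x =
      ((Nat.factorial (n-1) : ℝ) / 2) * (((1-x)⁻¹)^n - (-(1+x)⁻¹)^n) := by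
  induction n, hn using Nat.le_induction with
  | base =>
    intro x hx
    have h1 : (0:ℝ) < 1 + x := by cases abs_lt.mp hx; linarith
    have h2 : (0:ℝ) < 1 - x := by cases abs_lt.mp hx; linarith
    have hA : HasDerivAt (fun y : ℝ => Real.log (1 + y)) ((1+x)⁻¹ * 1) x := by
      have : HasDerivAt (fun y : ℝ => 1 + y) 1 x := (hasDerivAt_id x).const_add 1
      exact (Real.hasDerivAt_log h1.ne').comp x this
    have hB : HasDerivAt (fun y : ℝ => Real.log (1 - y)) ((1-x)⁻¹ * (-1)) x := by
      have : HasDerivAt (fun y : ℝ => 1 - y) (-1) x := (hasDerivAt_id x).const_sub 1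
      exact (Real.hasDerivAt_log h2.ne').comp x this
    have h : HasDerivAt (fun y : ℝ => (1/2) * (Real.log (1+y) - Real.log (1-y)))
        ((1/2) * ((1+x)⁻¹ * 1 - (1-x)⁻¹ * (-1))) x := (hA.sub hB).const_mul (1/2)
    have h' : HasDerivAt arctanh ((1/2) * ((1+x)⁻¹ * 1 - (1-x)⁻¹ * (-1))) x :=
      h.congr_of_eventuallyEq (arctanh_eventuallyEq hx)
    rw [iteratedDeriv_one, h'.deriv]
    simp [Nat.factorial]
    ring
  | succ n hn ih =>
    intro x hx
    obtain ⟨m, rfl⟩ : ∃ m, n = m + 1 := ⟨n - 1, (Nat.succ_pred_eq_of_pos hn).symm⟩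
    have h1 : (0:ℝ) < 1 + x := by cases abs_lt.mp hx; linarith
    have h2 : (0:ℝ) < 1 - x := by cases abs_lt.mp hx; linarith
    have heq : iteratedDeriv (m+1) arctanh =ᶠ[nhds x]
        fun y => ((Nat.factorial m : ℝ) / 2) * (((1-y)⁻¹)^(m+1) - (-(1+y)⁻¹)^(m+1)) := by
      have hmem : Metric.ball (0:ℝ) 1 ∈ nhds x :=
        Metric.isOpen_ball.mem_nhds (by simpa [Real.dist_eq] using hx)
      filter_upwards [hmem] with y hy
      have hy' : |y| < 1 := by simpa [Real.dist_eq] using hy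
      simpa using ih y hy'
    rw [iteratedDeriv_succ, heq.deriv_eq]
    have hA : HasDerivAt (fun y : ℝ => ((1-y)⁻¹)^(m+1))
        ((m+1 : ℕ) * ((1-x)⁻¹)^(m+1-1) * (-(-1)/(1-x)^2)) x := by
      have h : HasDerivAt (fun y : ℝ => 1 - y) (-1) x := (hasDerivAt_id x).const_sub 1
      exact (h.inv h2.ne').pow (m+1)
    have hB : HasDerivAt (fun y : ℝ => (-(1+y)⁻¹)^(m+1))
        ((m+1 : ℕ) * (-(1+x)⁻¹)^(m+1-1) * (-(-1/(1+x)^2))) x := by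
      have h : HasDerivAt (fun y : ℝ => 1 + y) 1 x := (hasDerivAt_id x).const_add 1
      have h' : HasDerivAt (fun y : ℝ => (1+y)⁻¹) (-1/(1+x)^2) x := by
        exact h.inv h1.ne'
      exact h'.neg.pow (m+1)
    have h : HasDerivAt (fun y : ℝ => ((Nat.factorial m : ℝ) / 2) *
        (((1-y)⁻¹)^(m+1) - (-(1+y)⁻¹)^(m+1)))
        (((Nat.factorial m : ℝ) / 2) *
          ((m+1 : ℕ) * ((1-x)⁻¹)^(m+1-1) * (-(-1)/(1-x)^2)
           - (m+1 : ℕ) * (-(1+x)⁻¹)^(m+1-1) * (-(-1/(1+x)^2)))) x :=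
      (hA.sub hB).const_mul _
    rw [h.deriv]
    have hf : (Nat.factorial (m + 1 + 1 - 1) : ℝ) = (m+1) * Nat.factorial m := by
      push_cast [Nat.factorial_succ]; ring
    rw [hf]
    simp only [Nat.add_sub_cancel]
    have h1' := h1.ne'
    have h2' := h2.ne'
    simp only [neg_pow ((1 + x)⁻¹), inv_pow]
    field_simp
    push_cast
    ring

lemma sum_odd (n : ℕ) (hn : 1 ≤ n) (x : ℝ) :
    ∑ k ∈ Finset.range ((n - 1) / 2 + 1),
      (n.choose (2 * k + 1) : ℝ) * x ^ (n - 2 * k - 1)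
    = ((1+x)^n - (x-1)^n) / 2 := by
  have h1 : (1+x)^n = ∑ j ∈ Finset.range (n+1), (n.choose j : ℝ) * x^(n-j) := by
    rw [add_pow]
    exact Finset.sum_congr rfl fun j hj => by ring
  have h2 : (x-1)^n = ∑ j ∈ Finset.range (n+1), (-1:ℝ)^j * (n.choose j : ℝ) * x^(n-j) := by
    have : (x - 1 : ℝ) = -1 + x := by ring
    rw [this, add_pow]
    exact Finset.sum_congr rfl fun j hj => by ring
  rw [h1, h2, ← Finset.sum_sub_distrib]
  rw [eq_div_iff (two_ne_zero)]
  rw [← Finset.sum_filter_add_sum_filter_not (Finset.range (n+1)) (fun j => j % 2 = 1)]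
  have hz : ∑ j ∈ (Finset.range (n+1)).filter (fun j => ¬ j % 2 = 1),
      ((n.choose j : ℝ) * x^(n-j) - (-1:ℝ)^j * (n.choose j : ℝ) * x^(n-j)) = 0 := by
    apply Finset.sum_eq_zero
    intro j hj
    simp only [Finset.mem_filter] at hj
    have : Even j := Nat.even_iff.mpr (by omega)
    rw [this.neg_one_pow]
    ring
  rw [hz, add_zero]
  rw [Finset.sum_mul]
  apply Finset.sum_nbij' (i := fun k => 2 * k + 1) (j := fun j => j / 2)
  · intro k hk
    simp only [Finset.mem_filter, Finset.mem_range] at *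
    omega
  · intro j hj
    simp only [Finset.mem_filter, Finset.mem_range] at *
    omega
  · intro k hk; omega
  · intro j hj
    simp only [Finset.mem_filter, Finset.mem_range] at hj
    omega
  · intro k hk
    have hodd : Odd (2 * k + 1) := ⟨k, by ring⟩
    rw [hodd.neg_one_pow]
    have : n - 2 * k - 1 = n - (2 * k + 1) := by omega
    rw [this]
    ring

/-- For every integer `n ≥ 1` and every real `x` with `|x| < 1`,
`Dₓⁿ arctanh(x) = ((n-1)! / (1-x²)ⁿ) · Σ_{k=0}^{⌊(n-1)/2⌋} C(n,2k+1) x^(n-2k-1)`. -/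
theorem iteratedDeriv_arctanh_eq_polynomial (n : ℕ) (hn : 1 ≤ n) (x : ℝ) (hx : |x| < 1) :
    iteratedDeriv n arctanh x =
      ((Nat.factorial (n - 1) : ℝ) / (1 - x ^ 2) ^ n) *
        ∑ k ∈ Finset.range ((n - 1) / 2 + 1),
          (n.choose (2 * k + 1) : ℝ) * x ^ (n - 2 * k - 1) := by
  have h1 : (0:ℝ) < 1 + x := by cases abs_lt.mp hx; linarith
  have h2 : (0:ℝ) < 1 - x := by cases abs_lt.mp hx; linarith
  rw [key n hn x hx, sum_odd n hn x]
  have hfac : (1 - x^2 : ℝ) = (1-x) * (1+x) := by ring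
  rw [hfac, mul_pow, neg_pow, inv_pow, inv_pow]
  have hx1 : (1-x:ℝ)^n ≠ 0 := pow_ne_zero _ h2.ne'
  have hx2 : (1+x:ℝ)^n ≠ 0 := pow_ne_zero _ h1.ne'
  have hxm : (x-1:ℝ)^n = (-1)^n * (1-x)^n := by rw [← neg_pow]; ring_nf
  rw [hxm]
  field_simp
end

section
/- For every integer n ≥ 1 and every real number x with |x| > 1, the n-th derivative of the inverse hyperbolic cotangent function satisfies Dₓⁿ (arctanh(1/x)) = ((n-1)! / (1-x²)ⁿ) · Σ_{k=0}^{⌊(n-1)/2⌋} C(n, 2k+1) x^{n-2k-1}, i.e. the same closed-form formula as the n-th derivative of the inverse hyperbolic tangent function. -/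
private lemma aux_ne {x : ℝ} (hx : 1 < |x|) : x ≠ 0 ∧ (1:ℝ) + x ≠ 0 ∧ (1:ℝ) - x ≠ 0 := by
  rcases lt_abs.mp hx with h | h
  · refine ⟨by linarith, by linarith, by linarith⟩
  · refine ⟨by linarith, by linarith, by linarith⟩

private noncomputable def Fc (y : ℝ) : ℝ := (1/2) * (Real.log (1+y) - Real.log (1-y))

private lemma isOpen_big : IsOpen {y : ℝ | 1 < |y|} :=
  isOpen_lt continuous_const continuous_abs

private lemma eventuallyEq_Fc {x : ℝ} (hx : 1 < |x|) :
    (fun y => arctanh (1/y)) =ᶠ[nhds x] Fc := by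
  filter_upwards [isOpen_big.mem_nhds hx] with y hy
  obtain ⟨h0, h1, h2⟩ := aux_ne hy
  have hy1 : y - 1 ≠ 0 := fun h => h2 (by linarith [sub_eq_zero.mp h])
  have hq : (1 + 1/y) / (1 - 1/y) = (y+1)/(y-1) := by
    field_simp
  have hyp1 : y + 1 ≠ 0 := fun h => h1 (by linarith [eq_neg_of_add_eq_zero_left h])
  simp only [arctanh, Fc, hq]
  rw [Real.log_div hyp1 hy1,
    show y - 1 = -(1 - y) by ring, Real.log_neg_eq_log,
    show y + 1 = 1 + y by ring]

private lemma iteratedDeriv_congr_nhds (n : ℕ) {f g : ℝ → ℝ} {x : ℝ}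
    (h : f =ᶠ[nhds x] g) : iteratedDeriv n f x = iteratedDeriv n g x := by
  have H : ∀ m, iteratedDeriv m f =ᶠ[nhds x] iteratedDeriv m g := by
    intro m
    induction m with
    | zero => simpa [iteratedDeriv_zero] using h
    | succ m ih => rw [iteratedDeriv_succ, iteratedDeriv_succ]; exact ih.deriv
  exact (H n).eq_of_nhds

private lemma key_deriv (n : ℕ) : ∀ x : ℝ, 1 < |x| →
    iteratedDeriv (n+1) Fc x =
      ((n.factorial : ℝ)/2) * ((-1)^n * ((1+x)^(n+1))⁻¹ + ((1-x)^(n+1))⁻¹) := by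
  induction n with
  | zero =>
    intro x hx
    obtain ⟨h0, h1, h2⟩ := aux_ne hx
    have d1 : HasDerivAt (fun y : ℝ => Real.log (1+y)) ((1+x)⁻¹ * 1) x :=
      (Real.hasDerivAt_log h1).comp x ((hasDerivAt_id x).const_add 1)
    have d2 : HasDerivAt (fun y : ℝ => Real.log (1-y)) ((1-x)⁻¹ * (-1)) x :=
      (Real.hasDerivAt_log h2).comp x ((hasDerivAt_id x).const_sub 1)
    have hd : HasDerivAt Fc ((1/2) * ((1+x)⁻¹ * 1 - (1-x)⁻¹ * (-1))) x :=
      (d1.sub d2).const_mul (1/2)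
    rw [iteratedDeriv_one, hd.deriv]
    simp [Nat.factorial]
  | succ n ih =>
    intro x hx
    obtain ⟨h0, h1, h2⟩ := aux_ne hx
    rw [iteratedDeriv_succ]
    have hcong : iteratedDeriv (n+1) Fc =ᶠ[nhds x]
        (fun y => ((n.factorial : ℝ)/2) * ((-1)^n * ((1+y)^(n+1))⁻¹ + ((1-y)^(n+1))⁻¹)) := by
      filter_upwards [isOpen_big.mem_nhds hx] with y hy
      exact ih y hy
    rw [hcong.deriv_eq]
    have p1 : HasDerivAt (fun y : ℝ => (1+y)^(n+1)) ((↑(n+1)) * (1+x)^(n+1-1) * 1) x :=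
      ((hasDerivAt_id x).const_add 1).pow (n+1)
    have p2 : HasDerivAt (fun y : ℝ => (1-y)^(n+1)) ((↑(n+1)) * (1-x)^(n+1-1) * (-1)) x :=
      ((hasDerivAt_id x).const_sub 1).pow (n+1)
    have q1 := p1.inv (pow_ne_zero _ h1)
    have q2 := p2.inv (pow_ne_zero _ h2)
    have hd := ((q1.const_mul ((-1:ℝ)^n)).add q2).const_mul ((n.factorial : ℝ)/2)
    rw [(show HasDerivAt (fun y : ℝ => ((n.factorial : ℝ)/2) * ((-1)^n * ((1+y)^(n+1))⁻¹ + ((1-y)^(n+1))⁻¹)) _ x from hd).deriv]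
    have ha : ((1:ℝ)+x)^(n+1) ≠ 0 := pow_ne_zero _ h1
    have hb : ((1:ℝ)-x)^(n+1) ≠ 0 := pow_ne_zero _ h2
    have ha2 : ((1:ℝ)+x)^(n+2) ≠ 0 := pow_ne_zero _ h1
    have hb2 : ((1:ℝ)-x)^(n+2) ≠ 0 := pow_ne_zero _ h2
    simp only [Nat.add_sub_cancel, Nat.factorial_succ]
    push_cast
    field_simp
    ring

private lemma sum_choose_odd (n : ℕ) (hn : 1 ≤ n) (x : ℝ) :
    2 * ∑ k ∈ Finset.range ((n-1)/2 + 1), (n.choose (2*k+1) : ℝ) * x ^ (n - 2*k - 1)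
      = (x+1)^n - (x-1)^n := by
  have h2 : ((x:ℝ)-1)^n = (x + (-1))^n := by ring_nf
  rw [h2, add_pow, add_pow, ← Finset.sum_sub_distrib]
  have step : ∀ j ∈ Finset.range (n+1),
      x ^ j * (1:ℝ) ^ (n-j) * ↑(n.choose j) - x ^ j * (-1:ℝ) ^ (n-j) * ↑(n.choose j)
      = if Odd (n - j) then 2 * ((n.choose j : ℝ) * x ^ j) else 0 := by
    intro j hj
    rcases Nat.even_or_odd (n - j) with h | h
    · simp [Nat.not_odd_iff_even.mpr h, h.neg_one_pow]
    · simp [h, h.neg_one_pow]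
      ring
  rw [Finset.sum_congr rfl step, ← Finset.sum_filter, Finset.mul_sum]
  refine Finset.sum_nbij' (fun k => n - (2*k+1)) (fun j => (n - j - 1)/2) ?_ ?_ ?_ ?_ ?_
  · intro k hk
    simp only [Finset.mem_range] at hk
    simp only [Finset.mem_filter, Finset.mem_range]
    constructor
    · omega
    · have : n - (n - (2*k+1)) = 2*k+1 := by omega
      rw [this]; exact ⟨k, by ring⟩
  · intro j hj
    simp only [Finset.mem_filter, Finset.mem_range] at hj
    obtain ⟨hjle, m, hm⟩ := hj
    simp only [Finset.mem_range]
    omega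
  · intro k hk
    simp only [Finset.mem_range] at hk
    omega
  · intro j hj
    simp only [Finset.mem_filter, Finset.mem_range] at hj
    obtain ⟨hjle, m, hm⟩ := hj
    omega
  · intro k hk
    simp only [Finset.mem_range] at hk
    have h1 : 2*k+1 ≤ n := by omega
    have h2' : n - (n - (2*k+1)) = 2*k+1 := by omega
    have h3 : n - 2*k - 1 = n - (2*k+1) := by omega
    rw [h3, ← Nat.choose_symm h1]

/-- For every integer `n ≥ 1` and every real `x` with `|x| > 1`,
`Dₓⁿ arccoth(x) = ((n-1)! / (1-x²)ⁿ) · Σ_{k=0}^{⌊(n-1)/2⌋} C(n,2k+1) x^(n-2k-1)`,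
where `arccoth x = arctanh (1/x)`. -/
theorem iteratedDeriv_arccoth_eq_polynomial (n : ℕ) (hn : 1 ≤ n) (x : ℝ) (hx : 1 < |x|) :
    iteratedDeriv n (fun y => arctanh (1 / y)) x =
      ((Nat.factorial (n - 1) : ℝ) / (1 - x ^ 2) ^ n) *
        ∑ k ∈ Finset.range ((n - 1) / 2 + 1),
          (n.choose (2 * k + 1) : ℝ) * x ^ (n - 2 * k - 1) := by
  obtain ⟨m, rfl⟩ : ∃ m, n = m + 1 := ⟨n - 1, by omega⟩
  obtain ⟨h0, h1, h2⟩ := aux_ne hx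
  rw [iteratedDeriv_congr_nhds (m+1) (eventuallyEq_Fc hx), key_deriv m x hx]
  have hs := sum_choose_odd (m+1) (by omega) x
  have hS : ∑ k ∈ Finset.range (((m+1)-1)/2 + 1), ((m+1).choose (2*k+1) : ℝ) * x ^ ((m+1) - 2*k - 1)
      = ((x+1)^(m+1) - (x-1)^(m+1)) / 2 := by linarith
  simp only [Nat.add_sub_cancel] at hS ⊢
  rw [hS, show (x:ℝ)+1 = 1+x by ring, show (x:ℝ)-1 = -(1-x) by ring,
    show ((-(1-x)):ℝ)^(m+1) = -((-1:ℝ)^m * (1-x)^(m+1)) by rw [neg_pow, pow_succ]; ring,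
    show (1:ℝ) - x^2 = (1+x)*(1-x) by ring, mul_pow]
  have ha : ((1:ℝ)+x)^(m+1) ≠ 0 := pow_ne_zero _ h1
  have hb : ((1:ℝ)-x)^(m+1) ≠ 0 := pow_ne_zero _ h2
  set A := ((1:ℝ)+x)^(m+1) with hA
  set B := ((1:ℝ)-x)^(m+1) with hB
  set U := ((-1:ℝ))^m with hU
  field_simp
  ring
end

section
/- For every integer n ≥ 1 and every real number x, the n-th derivative of the inverse tangent function satisfies Dₓⁿ arctan(x) = ((-1)^{n+1} (n-1)! / (√(1+x²))^{n+1}) · U_{n-1}(x / √(1+x²)), where U_{n-1} is the (n−1)-st Chebyshev polynomial of the second kind evaluated at the real number x/√(1+x²). -/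
open Polynomial Polynomial.Chebyshev in
private lemma U_deriv' (n : ℤ) : (1 - X^2) * derivative (U ℝ n) =
    ((n:ℝ[X])+2)*X*U ℝ n - ((n:ℝ[X])+1)*U ℝ (n+1) := by
  have h1 := add_one_mul_T_eq_poly_in_U (R := ℝ) n
  have h2 := U_eq_X_mul_U_add_T (R := ℝ) n
  linear_combination h1 + ((n:ℝ[X])+1)*h2

open Polynomial Polynomial.Chebyshev in
private lemma U_deriv_eval' (n : ℤ) (u : ℝ) :
    (1 - u^2) * (derivative (U ℝ n)).eval u =
      ((n:ℝ)+2)*u*(U ℝ n).eval u - ((n:ℝ)+1)*(U ℝ (n+1)).eval u := by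
  have := congrArg (Polynomial.eval u) (U_deriv' n)
  simpa using this

private lemma hasDerivAt_sqrt_one_add_sq' (y : ℝ) :
    HasDerivAt (fun y => Real.sqrt (1 + y^2)) (y / Real.sqrt (1 + y^2)) y := by
  have h0 : (1 : ℝ) + y^2 ≠ 0 := by positivity
  have h1 : HasDerivAt (fun y : ℝ => 1 + y^2) (2*y) y := by
    simpa using ((hasDerivAt_pow 2 y).const_add 1)
  have := (Real.hasDerivAt_sqrt h0).comp y h1
  refine this.congr_deriv (Eq.symm ?_)
  field_simp

open Polynomial Polynomial.Chebyshev in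
private lemma key_hasDerivAt' (m : ℕ) (x : ℝ) :
    HasDerivAt (fun y => ((-1:ℝ)^(m+2) * (Nat.factorial m : ℝ) / (Real.sqrt (1+y^2))^(m+2)) *
        (U ℝ (m:ℤ)).eval (y / Real.sqrt (1+y^2)))
      (((-1:ℝ)^(m+3) * (Nat.factorial (m+1) : ℝ) / (Real.sqrt (1+x^2))^(m+3)) *
        (U ℝ ((m:ℤ)+1)).eval (x / Real.sqrt (1+x^2))) x := by
  set s := Real.sqrt (1+x^2) with hs
  have hspos : 0 < s := Real.sqrt_pos.mpr (by positivity)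
  have hs0 : s ≠ 0 := hspos.ne'
  have hs2 : s^2 = 1 + x^2 := Real.sq_sqrt (by positivity)
  set u := x / s with hu
  have hsder := hasDerivAt_sqrt_one_add_sq' x
  have hinner : HasDerivAt (fun y => y / Real.sqrt (1+y^2)) (1 / s^3) x := by
    have := (hasDerivAt_id x).div hsder hs0
    refine this.congr_deriv (Eq.symm ?_)
    simp only [id, ← hs]
    field_simp
    linear_combination -hs2
  set c : ℝ := (-1:ℝ)^(m+2) * (Nat.factorial m : ℝ) with hc
  set P := (U ℝ (m:ℤ)).eval u with hP
  set Q := (U ℝ ((m:ℤ)+1)).eval u with hQ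
  set D := (derivative (U ℝ (m:ℤ))).eval u with hD
  have hpoly : HasDerivAt (fun y => (U ℝ (m:ℤ)).eval (y / Real.sqrt (1+y^2)))
      (D * (1/s^3)) x := by have := (Polynomial.hasDerivAt (p := U ℝ (m:ℤ)) u).comp x hinner; exact this
  have hnum : HasDerivAt (fun y => c * (U ℝ (m:ℤ)).eval (y / Real.sqrt (1+y^2)))
      (c * (D * (1/s^3))) x := hpoly.const_mul c
  have hden : HasDerivAt (fun y => (Real.sqrt (1+y^2))^(m+2))
      (((m:ℝ)+2) * s^(m+1) * (x/s)) x := by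
    have := hsder.pow (m+2)
    refine this.congr_deriv (Eq.symm ?_)
    simp only [← hs]
    push_cast
    ring_nf
  have hdiv := hnum.div hden (pow_ne_zero _ hs0)
  have hfun : (fun y => ((-1:ℝ)^(m+2) * (Nat.factorial m : ℝ) / (Real.sqrt (1+y^2))^(m+2)) *
        (U ℝ (m:ℤ)).eval (y / Real.sqrt (1+y^2)))
      = (fun y => c * (U ℝ (m:ℤ)).eval (y / Real.sqrt (1+y^2)) / (Real.sqrt (1+y^2))^(m+2)) := by
    funext y; rw [hc]; ring
  rw [hfun]
  refine hdiv.congr_deriv (Eq.symm ?_)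
  simp only [← hs]
  have hUd := U_deriv_eval' (m:ℤ) u
  rw [← hP, ← hQ, ← hD] at hUd
  have h1u : 1 - u^2 = 1/s^2 := by
    rw [hu]; field_simp; linear_combination hs2
  have hDval : D = ((m:ℝ)+2)*u*P*s^2 - ((m:ℝ)+1)*Q*s^2 := by
    rw [h1u] at hUd
    field_simp at hUd
    linear_combination hUd
  have hfac : (Nat.factorial (m+1) : ℝ) = ((m:ℝ)+1) * (Nat.factorial m : ℝ) := by
    rw [Nat.factorial_succ]; push_cast; ring
  rw [hfac, hDval, hc, hu]
  field_simp
  ring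

open Polynomial Polynomial.Chebyshev in
private lemma iteratedDeriv_arctan_aux' (m : ℕ) (x : ℝ) :
    iteratedDeriv (m+1) Real.arctan x =
      ((-1:ℝ)^(m+2) * (Nat.factorial m : ℝ) / (Real.sqrt (1+x^2))^(m+2)) *
        (U ℝ (m:ℤ)).eval (x / Real.sqrt (1+x^2)) := by
  induction m generalizing x with
  | zero =>
      have hs2 : (Real.sqrt (1+x^2))^2 = 1 + x^2 := Real.sq_sqrt (by positivity)
      simp [iteratedDeriv_one, Real.deriv_arctan, hs2]
  | succ m ih =>
      have hfun : iteratedDeriv (m+1) Real.arctan =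
          (fun y => ((-1:ℝ)^(m+2) * (Nat.factorial m : ℝ) / (Real.sqrt (1+y^2))^(m+2)) *
            (U ℝ (m:ℤ)).eval (y / Real.sqrt (1+y^2))) := funext ih
      rw [iteratedDeriv_succ, hfun, (key_hasDerivAt' m x).deriv]
      push_cast
      ring_nf

/-- For every integer `n ≥ 1` and every real `x`,
`Dₓⁿ arctan(x) = ((-1)^(n+1) (n-1)! / (√(1+x²))^(n+1)) · U_{n-1}(x/√(1+x²))`. -/
theorem iteratedDeriv_arctan_eq_chebyshevU (n : ℕ) (hn : 1 ≤ n) (x : ℝ) :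
    iteratedDeriv n Real.arctan x =
      ((-1) ^ (n + 1) * (Nat.factorial (n - 1) : ℝ) / (Real.sqrt (1 + x ^ 2)) ^ (n + 1)) *
        (Polynomial.Chebyshev.U ℝ ((n : ℤ) - 1)).eval (x / Real.sqrt (1 + x ^ 2)) := by
  obtain ⟨m, rfl⟩ : ∃ m, n = m + 1 := ⟨n - 1, (Nat.succ_pred_eq_of_pos hn).symm⟩
  have hidx : ((m+1 : ℕ) : ℤ) - 1 = (m : ℤ) := by push_cast; ring
  rw [hidx]
  simpa using iteratedDeriv_arctan_aux' m x
end

section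
/- For every integer n ≥ 1 and every real number x, the n-th derivative of the inverse tangent function satisfies Dₓⁿ arctan(x) = ((-1)^{n+1} (n-1)! · sg(x)^{n-1} / (√(1+x²))ⁿ) · sin(n · arcsin(1/√(1+x²))), where sg(x) = 1 if x ≥ 0 and sg(x) = −1 if x < 0. -/
open Real Complex

lemma arctan_aux_ne (x : ℝ) : (x : ℂ) - Complex.I ≠ 0 := by
  intro h
  have := congrArg Complex.im h
  simp at this

lemma arctan_iter_complex (n : ℕ) (x : ℝ) :
    iteratedDeriv (n + 1) Real.arctan x =
      ((-1 : ℂ) ^ (n + 2) * (Nat.factorial n : ℂ) * (((x : ℂ) - Complex.I)⁻¹) ^ (n + 1)).im := by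
  induction n generalizing x with
  | zero =>
    have : deriv Real.arctan x = 1 / (1 + x ^ 2) := (Real.hasDerivAt_arctan x).deriv
    rw [iteratedDeriv_one, this]
    rw [show ((-1 : ℂ) ^ (0 + 2) * (Nat.factorial 0 : ℂ) * (((x : ℂ) - Complex.I)⁻¹) ^ (0 + 1))
        = ((x : ℂ) - Complex.I)⁻¹ by norm_num]
    rw [Complex.inv_im]
    simp [Complex.normSq_apply]
    ring
  | succ m ih =>
    rw [iteratedDeriv_succ]
    have hfun : iteratedDeriv (m + 1) Real.arctan =
        fun y : ℝ => ((-1 : ℂ) ^ (m + 2) * (Nat.factorial (m) : ℂ) *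
          (((y : ℂ) - Complex.I)⁻¹) ^ (m + 1)).im := funext fun y => ih y
    rw [hfun]
    -- derivative of the complex function
    have h1 : ∀ y : ℝ, HasDerivAt (fun y : ℝ => (y : ℂ) - Complex.I) 1 y := by
      intro y
      simpa using (Complex.ofRealCLM.hasDerivAt (x := y)).sub_const Complex.I
    have h2 : HasDerivAt (fun y : ℝ => (-1 : ℂ) ^ (m + 2) * (Nat.factorial m : ℂ) *
          (((y : ℂ) - Complex.I)⁻¹) ^ (m + 1))
        ((-1 : ℂ) ^ (m + 3) * (Nat.factorial (m + 1) : ℂ) * (((x : ℂ) - Complex.I)⁻¹) ^ (m + 2)) x := by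
      have hcomp := (hasDerivAt_zpow (-(m+1 : ℤ)) ((x : ℂ) - Complex.I)
        (Or.inl (arctan_aux_ne x))).comp x (h1 x)
      have hmul := hcomp.const_mul ((-1 : ℂ) ^ (m + 2) * (Nat.factorial m : ℂ))
      have hfun2 : (fun y : ℝ => (-1 : ℂ) ^ (m + 2) * (Nat.factorial m : ℂ) *
            (((y : ℂ) - Complex.I)⁻¹) ^ (m + 1))
          = fun y : ℝ => (-1 : ℂ) ^ (m + 2) * (Nat.factorial m : ℂ) *
            (fun z : ℂ => z ^ (-(m+1 : ℤ))) (((y : ℂ) - Complex.I)) := by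
        funext y
        congr 1
        rw [inv_pow, ← zpow_natCast (((y : ℂ) - Complex.I)), ← zpow_neg]
        congr 1
      rw [hfun2]
      convert hmul using 1
      case e'_4 => rfl
      case e'_8 => rfl
      rw [show (-(m+1 : ℤ) - 1) = -((m+2 : ℕ) : ℤ) by push_cast; ring]
      rw [zpow_neg, zpow_natCast, ← inv_pow]
      rw [Nat.factorial_succ]
      push_cast
      ring_nf
    have him : HasDerivAt (fun y : ℝ => ((-1 : ℂ) ^ (m + 2) * (Nat.factorial m : ℂ) *
          (((y : ℂ) - Complex.I)⁻¹) ^ (m + 1)).im)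
        (((-1 : ℂ) ^ (m + 3) * (Nat.factorial (m + 1) : ℂ) * (((x : ℂ) - Complex.I)⁻¹) ^ (m + 2)).im)
        x := (Complex.imCLM.hasFDerivAt.comp_hasDerivAt x h2)
    rw [him.deriv]

/-- For every integer `n ≥ 1` and every real `x`,
`Dₓⁿ arctan(x) = ((-1)^(n+1) (n-1)! sg(x)^(n-1) / (√(1+x²))ⁿ) · sin(n arcsin(1/√(1+x²)))`,
where `sg(x) = 1` for `x ≥ 0` and `sg(x) = -1` for `x < 0`. -/
theorem iteratedDeriv_arctan_eq_sin_arcsin (n : ℕ) (hn : 1 ≤ n) (x : ℝ) :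
    iteratedDeriv n Real.arctan x =
      ((-1) ^ (n + 1) * (Nat.factorial (n - 1) : ℝ) *
          (if 0 ≤ x then (1 : ℝ) else -1) ^ (n - 1) / (Real.sqrt (1 + x ^ 2)) ^ n) *
        Real.sin (n * Real.arcsin (1 / Real.sqrt (1 + x ^ 2))) := by
  obtain ⟨m, rfl⟩ := Nat.exists_eq_add_of_le hn
  rw [add_comm 1 m]
  rw [arctan_iter_complex m x]
  set r := Real.sqrt (1 + x ^ 2) with hr
  have hr2 : r ^ 2 = 1 + x ^ 2 := Real.sq_sqrt (by positivity)
  have hrpos : 0 < r := Real.sqrt_pos.mpr (by positivity)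
  set α := Real.arcsin (1 / r) with hα
  set θ : ℝ := if 0 ≤ x then α else Real.pi - α with hθ
  have hrge : 1 ≤ r ^ 2 := by nlinarith
  have hle : 1 / r ≤ 1 := by
    rw [div_le_one hrpos]; nlinarith
  have hsinα : Real.sin α = 1 / r := by
    have h0 : (0:ℝ) < 1 / r := by positivity
    rw [hα, Real.sin_arcsin (by linarith) hle]
  have hcosα : Real.cos α = |x| / r := by
    rw [hα, Real.cos_arcsin]
    rw [show 1 - (1 / r) ^ 2 = (x / r) ^ 2 by field_simp; nlinarith]
    rw [Real.sqrt_sq_eq_abs, abs_div, abs_of_pos hrpos]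
  have hcosθ : Real.cos θ = x / r := by
    rw [hθ]; split_ifs with h
    · rw [hcosα, _root_.abs_of_nonneg h]
    · rw [Real.cos_pi_sub, hcosα, _root_.abs_of_neg (lt_of_not_ge h)]; ring
  have hsinθ : Real.sin θ = 1 / r := by
    rw [hθ]; split_ifs with h
    · exact hsinα
    · rw [Real.sin_pi_sub, hsinα]
  have hrne : (r : ℂ) ≠ 0 := by
    exact_mod_cast hrpos.ne'
  have hr2c : ((r : ℂ)) ^ 2 = 1 + (x : ℂ) ^ 2 := by
    have := congrArg (Complex.ofReal) hr2
    push_cast at this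
    exact_mod_cast this
  have hexp : Complex.exp (θ * Complex.I) = ((x : ℂ) + Complex.I) / r := by
    rw [Complex.exp_mul_I, ← Complex.ofReal_cos, ← Complex.ofReal_sin, hcosθ, hsinθ]
    rw [eq_div_iff hrne]
    push_cast
    field_simp
  have hinv : ((x : ℂ) - Complex.I)⁻¹ = (r : ℂ)⁻¹ * Complex.exp (θ * Complex.I) := by
    apply inv_eq_of_mul_eq_one_right
    rw [hexp]
    field_simp
    linear_combination -hr2c - Complex.I_sq
  have hpowinv : (((x : ℂ) - Complex.I)⁻¹) ^ (m + 1)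
      = ((r : ℂ)⁻¹) ^ (m + 1) * Complex.exp ((((m+1 : ℕ) * θ : ℝ)) * Complex.I) := by
    rw [hinv, mul_pow, ← Complex.exp_nat_mul]
    congr 1
    push_cast
    ring
  rw [hpowinv]
  have him : ((-1 : ℂ) ^ (m + 2) * (Nat.factorial m : ℂ) *
      (((r : ℂ)⁻¹) ^ (m + 1) * Complex.exp ((((m+1 : ℕ) * θ : ℝ)) * Complex.I))).im
      = (-1 : ℝ) ^ (m + 2) * (Nat.factorial m : ℝ) * (r⁻¹) ^ (m + 1) *
        Real.sin ((m + 1 : ℕ) * θ) := by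
    rw [show ((-1 : ℂ) ^ (m + 2) * (Nat.factorial m : ℂ) * (((r : ℂ)⁻¹) ^ (m + 1) *
        Complex.exp ((((m+1 : ℕ) * θ : ℝ)) * Complex.I)))
        = ((((-1 : ℝ) ^ (m + 2) * (Nat.factorial m : ℝ) * (r⁻¹) ^ (m + 1) : ℝ)) : ℂ) *
          Complex.exp ((((m+1 : ℕ) * θ : ℝ)) * Complex.I) by push_cast; ring]
    rw [Complex.mul_im, Complex.ofReal_re, Complex.ofReal_im, Complex.exp_ofReal_mul_I_im]
    ring
  rw [him]
  simp only [Nat.add_sub_cancel]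
  rw [hθ]
  split_ifs with h
  · rw [one_pow]
    field_simp
    rw [div_pow, one_pow, one_div_mul_eq_div, div_mul_cancel₀ _ (by positivity)]
  · rw [mul_sub, Real.sin_nat_mul_pi_sub]
    have e1 : ((-1:ℝ)) ^ (m + 2) * (-1:ℝ) ^ (m + 1) = -1 := by
      rw [← pow_add]
      have : Odd (m + 2 + (m + 1)) := ⟨m + 1, by ring⟩
      exact this.neg_one_pow
    have e2 : ((-1:ℝ)) ^ (m + 2) * (-1:ℝ) ^ m = 1 := by
      rw [← pow_add]
      have : Even (m + 2 + m) := ⟨m + 1, by ring⟩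
      exact this.neg_one_pow
    push_cast
    set t : ℝ := (Nat.factorial m : ℝ) * r⁻¹ ^ (m + 1) * Real.sin (((m : ℝ) + 1) * α) with ht
    linear_combination (-t) * e1 + (-t) * e2
end

section
/- Let T : ℕ × ℕ → ℤ satisfy T(0,k) = 1 if k = 1 and T(0,k) = 0 otherwise; T(n,0) = T(n−1,1) for n ≥ 1; and T(n,k) = (k−1)·T(n−1,k−1) + (k+1)·T(n−1,k+1) for n ≥ 1, k ≥ 1. Then for every integer n ≥ 0 and every real number x with cos(x) ≠ 0, Dₓⁿ tan(x) = Σ_{k=0}^{⌊(n+1)/2⌋} T(n, n−2k+1) · tan(x)^{n−2k+1}. -/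
/-- Higher derivatives of the tangent function as polynomials in `tan`, with the
tangent-polynomial coefficients `T` given by their recurrence. -/
theorem iteratedDeriv_tan_eq_sum (T : ℕ × ℕ → ℤ)
    (hT0 : ∀ k, T (0, k) = if k = 1 then 1 else 0)
    (hTn0 : ∀ n, 1 ≤ n → T (n, 0) = T (n - 1, 1))
    (hTnk : ∀ n k, 1 ≤ n → 1 ≤ k →
      T (n, k) = ((k : ℤ) - 1) * T (n - 1, k - 1) + ((k : ℤ) + 1) * T (n - 1, k + 1))
    (n : ℕ) (x : ℝ) (hx : Real.cos x ≠ 0) :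
    iteratedDeriv n Real.tan x =
      ∑ k ∈ Finset.range ((n + 1) / 2 + 1),
        (T (n, n + 1 - 2 * k) : ℝ) * Real.tan x ^ (n + 1 - 2 * k) := by
  classical
  -- T vanishes above the diagonal
  have hvanish : ∀ n k, n + 1 < k → T (n, k) = 0 := by
    intro n
    induction n with
    | zero =>
      intro k hk
      rw [hT0, if_neg (by omega)]
    | succ m ih =>
      intro k hk
      have h := hTnk (m + 1) k (by omega) (by omega)
      simp only [Nat.add_sub_cancel] at h
      rw [h, ih (k - 1) (by omega), ih (k + 1) (by omega)]
      ring
  -- T vanishes on wrong parity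
  have hparity : ∀ n k, (n + k) % 2 = 0 → T (n, k) = 0 := by
    intro n
    induction n with
    | zero =>
      intro k hk
      rw [hT0, if_neg (by omega)]
    | succ m ih =>
      intro k hk
      rcases Nat.eq_zero_or_pos k with rfl | hk1
      · rw [hTn0 (m + 1) (by omega)]
        simp only [Nat.add_sub_cancel]
        exact ih 1 (by omega)
      · have h := hTnk (m + 1) k (by omega) hk1
        simp only [Nat.add_sub_cancel] at h
        rw [h, ih (k - 1) (by omega), ih (k + 1) (by omega)]
        ring
  -- main claim with sum over all exponents
  have hG : ∀ n, ∀ x : ℝ, Real.cos x ≠ 0 → iteratedDeriv n Real.tan x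
      = ∑ l ∈ Finset.range (n + 2), (T (n, l) : ℝ) * Real.tan x ^ l := by
    intro n
    induction n with
    | zero =>
      intro x hx
      rw [iteratedDeriv_zero]
      rw [Finset.sum_range_succ, Finset.sum_range_one, hT0 0, hT0 1]
      norm_num
    | succ m ih =>
      intro x hx
      rw [iteratedDeriv_succ]
      have hU : IsOpen {y : ℝ | Real.cos y ≠ 0} :=
        isOpen_compl_singleton.preimage Real.continuous_cos
      have hev : iteratedDeriv m Real.tan
          =ᶠ[nhds x] fun y => ∑ l ∈ Finset.range (m + 2), (T (m, l) : ℝ) * Real.tan y ^ l := by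
        filter_upwards [hU.mem_nhds hx] with y hy using ih y hy
      rw [hev.deriv_eq]
      have htan := Real.hasDerivAt_tan hx
      have hpoly : HasDerivAt (fun t : ℝ => ∑ l ∈ Finset.range (m + 2), (T (m, l) : ℝ) * t ^ l)
          (∑ l ∈ Finset.range (m + 2), (T (m, l) : ℝ) * ((l : ℝ) * Real.tan x ^ (l - 1)))
          (Real.tan x) :=
        HasDerivAt.fun_sum fun l _ => (hasDerivAt_pow l _).const_mul _
      have hcomp : HasDerivAt
          (fun y => ∑ l ∈ Finset.range (m + 2), (T (m, l) : ℝ) * Real.tan y ^ l)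
          ((∑ l ∈ Finset.range (m + 2), (T (m, l) : ℝ) * ((l : ℝ) * Real.tan x ^ (l - 1)))
            * (1 / Real.cos x ^ 2)) x := hpoly.comp x htan
      rw [hcomp.deriv]
      have h1 : 1 / Real.cos x ^ 2 = 1 + Real.tan x ^ 2 := by
        rw [Real.tan_eq_sin_div_cos, div_pow]
        field_simp
        linarith [Real.sin_sq_add_cos_sq x]
      rw [h1]
      -- the key polynomial identity
      set t := Real.tan x with ht
      have hsplit : ∑ l ∈ Finset.range (m + 3), (T (m + 1, l) : ℝ) * t ^ l
          = ∑ l ∈ Finset.range (m + 3),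
              (((l - 1 : ℕ) : ℝ) * (T (m, l - 1) : ℝ) * t ^ l
                + ((l + 1 : ℕ) : ℝ) * (T (m, l + 1) : ℝ) * t ^ l) := by
        refine Finset.sum_congr rfl fun l _ => ?_
        rcases Nat.eq_zero_or_pos l with rfl | hl1
        · have h := hTn0 (m + 1) (by omega)
          simp only [Nat.add_sub_cancel] at h
          simp [h]
        · have h := hTnk (m + 1) l (by omega) hl1
          simp only [Nat.add_sub_cancel] at h
          have h2 : (T (m + 1, l) : ℝ)
              = ((l - 1 : ℕ) : ℝ) * (T (m, l - 1) : ℝ) + ((l + 1 : ℕ) : ℝ) * (T (m, l + 1) : ℝ) := by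
            rw [h]
            push_cast [Nat.cast_sub hl1]
            ring
          rw [h2]; ring
      rw [hsplit, Finset.sum_add_distrib]
      have hA : ∑ l ∈ Finset.range (m + 3), ((l + 1 : ℕ) : ℝ) * (T (m, l + 1) : ℝ) * t ^ l
          = ∑ l ∈ Finset.range (m + 2), (T (m, l) : ℝ) * ((l : ℝ) * t ^ (l - 1)) := by
        rw [Finset.sum_range_succ, Finset.sum_range_succ,
          hvanish m (m + 2) (by omega), hvanish m (m + 3) (by omega)]
        rw [Finset.sum_range_succ' (fun l => (T (m, l) : ℝ) * ((l : ℝ) * t ^ (l - 1))) (m + 1)]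
        simp only [Int.cast_zero, Nat.cast_zero, zero_mul, mul_zero, add_zero,
          Nat.add_sub_cancel]
        refine Finset.sum_congr rfl fun l _ => ?_
        push_cast
        ring
      have hB : ∑ l ∈ Finset.range (m + 3), ((l - 1 : ℕ) : ℝ) * (T (m, l - 1) : ℝ) * t ^ l
          = (∑ l ∈ Finset.range (m + 2), (T (m, l) : ℝ) * ((l : ℝ) * t ^ (l - 1))) * t ^ 2 := by
        rw [Finset.sum_range_succ'
          (fun l => ((l - 1 : ℕ) : ℝ) * (T (m, l - 1) : ℝ) * t ^ l) (m + 2)]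
        simp only [Nat.add_sub_cancel, Nat.zero_sub, Nat.cast_zero, zero_mul, add_zero]
        rw [Finset.sum_mul]
        refine Finset.sum_congr rfl fun l _ => ?_
        rcases Nat.eq_zero_or_pos l with rfl | hl1
        · norm_num
        · rw [show l + 1 = l - 1 + 2 by omega, pow_add]
          ring
      rw [hA, hB]
      ring
  -- convert the full sum to the parity-indexed sum
  rw [hG n x hx]
  have hinj : ∀ a ∈ Finset.range ((n + 1) / 2 + 1), ∀ b ∈ Finset.range ((n + 1) / 2 + 1),
      n + 1 - 2 * a = n + 1 - 2 * b → a = b := by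
    intro a ha b hb hab
    simp only [Finset.mem_range] at ha hb
    omega
  have himg : ∑ l ∈ (Finset.range ((n + 1) / 2 + 1)).image (fun k => n + 1 - 2 * k),
      (T (n, l) : ℝ) * Real.tan x ^ l
      = ∑ k ∈ Finset.range ((n + 1) / 2 + 1),
        (T (n, n + 1 - 2 * k) : ℝ) * Real.tan x ^ (n + 1 - 2 * k) := Finset.sum_image hinj
  rw [← himg]
  refine (Finset.sum_subset ?_ ?_).symm
  · intro l hl
    simp only [Finset.mem_image, Finset.mem_range] at hl
    obtain ⟨k, hk, rfl⟩ := hl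
    simp only [Finset.mem_range]
    omega
  · intro l hl hl'
    simp only [Finset.mem_image, Finset.mem_range, not_exists] at hl hl'
    have : (n + l) % 2 = 0 := by
      by_contra h
      exact hl' ((n + 1 - l) / 2) ⟨by omega, by omega⟩
    rw [hparity n l this]
    norm_num
end

section
/- Let T : ℕ × ℕ → ℤ satisfy T(0,k) = 1 if k = 1 and T(0,k) = 0 otherwise; T(n,0) = T(n−1,1) for n ≥ 1; and T(n,k) = (k−1)·T(n−1,k−1) + (k+1)·T(n−1,k+1) for n ≥ 1, k ≥ 1. Then for every integer n ≥ 0 and every real number x with sin(x) ≠ 0, Dₓⁿ cot(x) = (−1)ⁿ · Σ_{k=0}^{⌊(n+1)/2⌋} T(n, n−2k+1) · cot(x)^{n−2k+1}. -/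
section Aux
variable (T : ℕ × ℕ → ℤ)
  (hT0 : ∀ k, T (0, k) = if k = 1 then 1 else 0)
  (hTn0 : ∀ n, 1 ≤ n → T (n, 0) = T (n - 1, 1))
  (hTnk : ∀ n k, 1 ≤ n → 1 ≤ k →
    T (n, k) = ((k : ℤ) - 1) * T (n - 1, k - 1) + ((k : ℤ) + 1) * T (n - 1, k + 1))

include hT0 hTnk in
lemma T_high : ∀ n k, n + 2 ≤ k → T (n, k) = 0 := by
  intro n
  induction n with
  | zero => intro k hk; rw [hT0]; simp; omega
  | succ n ih =>
    intro k hk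
    rw [hTnk (n+1) k (by omega) (by omega)]
    simp only [Nat.add_sub_cancel]
    rw [ih (k-1) (by omega), ih (k+1) (by omega)]
    ring

include hT0 hTn0 hTnk in
lemma T_parity : ∀ n k, (n + k) % 2 = 0 → T (n, k) = 0 := by
  intro n
  induction n with
  | zero => intro k hk; rw [hT0]; simp; omega
  | succ n ih =>
    intro k hk
    rcases Nat.eq_zero_or_pos k with rfl | hk1
    · rw [hTn0 (n+1) (by omega)]
      simp only [Nat.add_sub_cancel]
      exact ih 1 (by omega)
    · rw [hTnk (n+1) k (by omega) hk1]
      simp only [Nat.add_sub_cancel]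
      rw [ih (k-1) (by omega), ih (k+1) (by omega)]
      ring
end Aux

lemma hasDerivAt_cot {x : ℝ} (hx : Real.sin x ≠ 0) :
    HasDerivAt Real.cot (-(1 + Real.cot x ^ 2)) x := by
  have h : HasDerivAt (fun y => Real.cos y / Real.sin y)
      ((-Real.sin x * Real.sin x - Real.cos x * Real.cos x) / Real.sin x ^ 2) x :=
    (Real.hasDerivAt_cos x).div (Real.hasDerivAt_sin x) hx
  have he : (fun y => Real.cos y / Real.sin y) = Real.cot := by
    funext y; rw [Real.cot_eq_cos_div_sin]
  rw [he] at h
  convert h using 1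
  rw [Real.cot_eq_cos_div_sin]
  field_simp
  nlinarith [Real.sin_sq_add_cos_sq x]

section Key
variable (T : ℕ × ℕ → ℤ)
  (hT0 : ∀ k, T (0, k) = if k = 1 then 1 else 0)
  (hTn0 : ∀ n, 1 ≤ n → T (n, 0) = T (n - 1, 1))
  (hTnk : ∀ n k, 1 ≤ n → 1 ≤ k →
    T (n, k) = ((k : ℤ) - 1) * T (n - 1, k - 1) + ((k : ℤ) + 1) * T (n - 1, k + 1))

include hT0 hTn0 hTnk in
lemma T_key (n : ℕ) (c : ℝ) :
    ∑ j ∈ Finset.range (n + 3), (T (n + 1, j) : ℝ) * c ^ j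
      = ∑ j ∈ Finset.range (n + 2),
        ((j : ℝ) * T (n, j) * c ^ (j + 1) + (j : ℝ) * T (n, j) * c ^ (j - 1)) := by
  have hrec : ∀ i : ℕ, (T (n + 1, i + 1) : ℝ)
      = (i : ℝ) * T (n, i) + ((i : ℝ) + 2) * T (n, i + 2) := by
    intro i
    rw [hTnk (n + 1) (i + 1) (by omega) (by omega)]
    simp only [Nat.add_sub_cancel]
    push_cast
    ring
  rw [Finset.sum_range_succ']
  have h0 : (T (n + 1, 0) : ℝ) * c ^ 0 = (T (n, 1) : ℝ) := by
    rw [hTn0 (n + 1) (by omega)]; simp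
  rw [h0]
  have h1 : ∀ i ∈ Finset.range (n + 2), (T (n + 1, i + 1) : ℝ) * c ^ (i + 1)
      = (i : ℝ) * T (n, i) * c ^ (i + 1) + ((i : ℝ) + 2) * T (n, i + 2) * c ^ (i + 1) := by
    intro i _; rw [hrec i]; ring
  rw [Finset.sum_congr rfl h1, Finset.sum_add_distrib, Finset.sum_add_distrib]
  have h2 : (T (n, 1) : ℝ) + ∑ i ∈ Finset.range (n + 2), ((i : ℝ) + 2) * T (n, i + 2) * c ^ (i + 1)
      = ∑ j ∈ Finset.range (n + 2), (j : ℝ) * T (n, j) * c ^ (j - 1) := by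
    conv_rhs => rw [Finset.sum_range_succ', Finset.sum_range_succ']
    conv_lhs => rw [Finset.sum_range_succ, Finset.sum_range_succ]
    rw [T_high T hT0 hTnk n (n + 1 + 2) (by omega), T_high T hT0 hTnk n (n + 2) (by omega)]
    have h3 : ∀ m ∈ Finset.range n,
        ((m + 1 + 1 : ℕ) : ℝ) * T (n, m + 1 + 1) * c ^ (m + 1 + 1 - 1)
          = ((m : ℝ) + 2) * T (n, m + 2) * c ^ (m + 1) := by
      intro m _
      have he : m + 1 + 1 = m + 2 := rfl
      rw [he]
      push_cast
      ring_nf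
    rw [Finset.sum_congr rfl h3]
    push_cast
    ring
  linarith [h2]
end Key

theorem iteratedDeriv_cot_eq_sum' (T : ℕ × ℕ → ℤ)
    (hT0 : ∀ k, T (0, k) = if k = 1 then 1 else 0)
    (hTn0 : ∀ n, 1 ≤ n → T (n, 0) = T (n - 1, 1))
    (hTnk : ∀ n k, 1 ≤ n → 1 ≤ k →
      T (n, k) = ((k : ℤ) - 1) * T (n - 1, k - 1) + ((k : ℤ) + 1) * T (n - 1, k + 1))
    (n : ℕ) : ∀ x : ℝ, Real.sin x ≠ 0 →
    iteratedDeriv n Real.cot x =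
      (-1) ^ n * ∑ j ∈ Finset.range (n + 2), (T (n, j) : ℝ) * Real.cot x ^ j := by
  induction n with
  | zero =>
    intro x hx
    simp [Finset.sum_range_succ, hT0]
  | succ n ih =>
    intro x hx
    rw [iteratedDeriv_succ]
    have hev : iteratedDeriv n Real.cot =ᶠ[nhds x]
        (fun y => (-1) ^ n * ∑ j ∈ Finset.range (n + 2), (T (n, j) : ℝ) * Real.cot y ^ j) := by
      filter_upwards [Real.continuous_sin.continuousAt.eventually_ne hx] with y hy
      exact ih y hy
    rw [hev.deriv_eq]
    have hD : HasDerivAt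
        (fun y => (-1) ^ n * ∑ j ∈ Finset.range (n + 2), (T (n, j) : ℝ) * Real.cot y ^ j)
        ((-1) ^ n * ∑ j ∈ Finset.range (n + 2),
          (T (n, j) : ℝ) * ((j : ℝ) * Real.cot x ^ (j - 1) * (-(1 + Real.cot x ^ 2)))) x := by
      apply HasDerivAt.const_mul
      apply HasDerivAt.fun_sum
      intro j _
      exact ((hasDerivAt_cot hx).pow j).const_mul _
    rw [hD.deriv]
    rw [T_key T hT0 hTn0 hTnk n (Real.cot x)]
    rw [show ((-1 : ℝ)) ^ (n + 1) = -(-1) ^ n by ring, neg_mul, ← mul_neg,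
      ← Finset.sum_neg_distrib]
    congr 1
    apply Finset.sum_congr rfl
    intro j _
    rcases Nat.eq_zero_or_pos j with rfl | hj
    · simp
    · have hpow : Real.cot x ^ (j - 1) * Real.cot x ^ 2 = Real.cot x ^ (j + 1) := by
        rw [← pow_add]; congr 1; omega
      linear_combination (-(j : ℝ) * (T (n, j) : ℝ)) * hpow

theorem sum_reindex (T : ℕ × ℕ → ℤ)
    (hT0 : ∀ k, T (0, k) = if k = 1 then 1 else 0)
    (hTn0 : ∀ n, 1 ≤ n → T (n, 0) = T (n - 1, 1))
    (hTnk : ∀ n k, 1 ≤ n → 1 ≤ k →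
      T (n, k) = ((k : ℤ) - 1) * T (n - 1, k - 1) + ((k : ℤ) + 1) * T (n - 1, k + 1))
    (n : ℕ) (c : ℝ) :
    ∑ j ∈ Finset.range (n + 2), (T (n, j) : ℝ) * c ^ j =
    ∑ k ∈ Finset.range ((n + 1) / 2 + 1), (T (n, n + 1 - 2 * k) : ℝ) * c ^ (n + 1 - 2 * k) := by
  rw [← Finset.sum_filter_of_ne (p := fun j => (n + j) % 2 = 1)
    (by intro j hj h1
        by_contra h2
        exact h1 (by rw [T_parity T hT0 hTn0 hTnk n j (by omega)]; simp))]
  refine Finset.sum_nbij' (fun j => (n + 1 - j) / 2) (fun k => n + 1 - 2 * k) ?_ ?_ ?_ ?_ ?_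
  · intro j hj; simp only [Finset.mem_filter, Finset.mem_range] at *; omega
  · intro k hk; simp only [Finset.mem_filter, Finset.mem_range] at *
    constructor <;> omega
  · intro j hj; simp only [Finset.mem_filter, Finset.mem_range] at hj
    show n + 1 - 2 * ((n + 1 - j) / 2) = j; omega
  · intro k hk; simp only [Finset.mem_range] at hk
    show (n + 1 - (n + 1 - 2 * k)) / 2 = k; omega
  · intro j hj; simp only [Finset.mem_filter, Finset.mem_range] at hj
    have : n + 1 - 2 * ((n + 1 - j) / 2) = j := by omega
    show (T (n, j) : ℝ) * c ^ j = (T (n, n + 1 - 2 * ((n + 1 - j) / 2)) : ℝ) * c ^ (n + 1 - 2 * ((n + 1 - j) / 2))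
    rw [this]

/-- Higher derivatives of the cotangent function as polynomials in `cot`, with the
tangent-polynomial coefficients `T` given by their recurrence. -/
theorem iteratedDeriv_cot_eq_sum (T : ℕ × ℕ → ℤ)
    (hT0 : ∀ k, T (0, k) = if k = 1 then 1 else 0)
    (hTn0 : ∀ n, 1 ≤ n → T (n, 0) = T (n - 1, 1))
    (hTnk : ∀ n k, 1 ≤ n → 1 ≤ k →
      T (n, k) = ((k : ℤ) - 1) * T (n - 1, k - 1) + ((k : ℤ) + 1) * T (n - 1, k + 1))
    (n : ℕ) (x : ℝ) (hx : Real.sin x ≠ 0) :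
    iteratedDeriv n Real.cot x =
      (-1) ^ n * ∑ k ∈ Finset.range ((n + 1) / 2 + 1),
        (T (n, n + 1 - 2 * k) : ℝ) * Real.cot x ^ (n + 1 - 2 * k) := by
  rw [← sum_reindex T hT0 hTn0 hTnk n (Real.cot x)]
  exact iteratedDeriv_cot_eq_sum' T hT0 hTn0 hTnk n x hx
end

section
/- Let T : ℕ × ℕ → ℤ satisfy T(0,k) = 1 if k = 1 and T(0,k) = 0 otherwise; T(n,0) = T(n−1,1) for n ≥ 1; and T(n,k) = (k−1)·T(n−1,k−1) + (k+1)·T(n−1,k+1) for n ≥ 1, k ≥ 1. Then for every integer n ≥ 0 and every real number x, Dₓⁿ tanh(x) = (−1)ⁿ · Σ_{k=0}^{⌊(n+1)/2⌋} (−1)ᵏ T(n, n−2k+1) · tanh(x)^{n−2k+1}. -/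
open Real Finset

private def cc : ℕ → ℤ → ℤ
  | 0, j => if j = 1 then 1 else 0
  | n+1, j => (j+1) * cc n (j+1) - (j-1) * cc n (j-1)

private lemma cc_succ (n : ℕ) (j : ℤ) :
    cc (n+1) j = (j+1) * cc n (j+1) - (j-1) * cc n (j-1) := rfl

private lemma cc_zero : ∀ (n : ℕ) (j : ℤ), (j < 0 ∨ (n:ℤ)+1 < j) → cc n j = 0 := by
  intro n
  induction n with
  | zero => intro j hj; simp only [cc, if_neg (by omega : j ≠ 1)]
  | succ n ih =>
    intro j hj
    rw [cc_succ]
    rcases hj with h | h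
    · by_cases hj1 : j = -1
      · subst hj1
        have h2 := ih (-2) (by omega)
        norm_num [h2]
      · rw [ih (j+1) (by omega), ih (j-1) (by omega)]; ring
    · rw [ih (j+1) (by push_cast at h ⊢; omega), ih (j-1) (by push_cast at h ⊢; omega)]; ring

private lemma cc_parity : ∀ (n : ℕ) (j : ℤ), (j + n) % 2 = 0 → cc n j = 0 := by
  intro n
  induction n with
  | zero => intro j hj; simp only [cc, if_neg (by omega : j ≠ 1)]
  | succ n ih =>
    intro j hj
    rw [cc_succ]
    rw [ih (j+1) (by push_cast at hj ⊢; omega), ih (j-1) (by push_cast at hj ⊢; omega)]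
    ring

private lemma hasDerivAt_tanh' (x : ℝ) :
    HasDerivAt Real.tanh (1 - Real.tanh x ^ 2) x := by
  have h : HasDerivAt (fun y => Real.sinh y / Real.cosh y)
      ((Real.cosh x * Real.cosh x - Real.sinh x * Real.sinh x) / Real.cosh x ^ 2) x :=
    (Real.hasDerivAt_sinh x).div (Real.hasDerivAt_cosh x) (Real.cosh_pos x).ne'
  have h2 : (Real.cosh x * Real.cosh x - Real.sinh x * Real.sinh x) / Real.cosh x ^ 2
      = 1 - Real.tanh x ^ 2 := by
    rw [Real.tanh_eq_sinh_div_cosh]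
    have hc := (Real.cosh_pos x).ne'
    have h1 := Real.cosh_sq_sub_sinh_sq x
    field_simp
  simp only [← Real.tanh_eq_sinh_div_cosh] at h
  rwa [h2] at h

private lemma key_s16 : ∀ (n : ℕ) (x : ℝ), iteratedDeriv n Real.tanh x =
    ∑ j ∈ Finset.range (n+2), (cc n j : ℝ) * Real.tanh x ^ j := by
  intro n
  induction n with
  | zero =>
    intro x
    simp [cc, Finset.sum_range_succ]
  | succ n ih =>
    intro x
    rw [iteratedDeriv_succ]
    have hfun : iteratedDeriv n Real.tanh =
        fun y => ∑ j ∈ Finset.range (n+2), (cc n j : ℝ) * Real.tanh y ^ j := funext ih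
    rw [hfun]
    have hd : HasDerivAt (fun y => ∑ j ∈ Finset.range (n+2), (cc n j : ℝ) * Real.tanh y ^ j)
        (∑ j ∈ Finset.range (n+2),
          (cc n j : ℝ) * ((j : ℝ) * Real.tanh x ^ (j-1) * (1 - Real.tanh x ^ 2))) x := by
      apply HasDerivAt.fun_sum
      intro j hj
      exact ((hasDerivAt_tanh' x).pow j).const_mul _
    rw [hd.deriv]
    set t := Real.tanh x with ht
    have e1 : ∑ j ∈ Finset.range (n+3), ((j:ℝ)+1) * (cc n ((j:ℤ)+1) : ℝ) * t ^ j
        = ∑ j ∈ Finset.range (n+2), (cc n j : ℝ) * (j:ℝ) * t ^ (j-1) := by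
      have z1 : ((cc n (((n+2:ℕ):ℤ)+1) : ℤ) : ℝ) = 0 := by
        rw [cc_zero _ _ (by push_cast; omega)]; norm_num
      have z2 : ((cc n (((n+1:ℕ):ℤ)+1) : ℤ) : ℝ) = 0 := by
        rw [cc_zero _ _ (by push_cast; omega)]; norm_num
      rw [Finset.sum_range_succ, Finset.sum_range_succ, z1, z2,
        Finset.sum_range_succ' (fun j => (cc n j : ℝ) * (j:ℝ) * t ^ (j-1)) (n+1)]
      simp only [mul_zero, zero_mul, add_zero, Nat.cast_zero, mul_zero]
      apply Finset.sum_congr rfl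
      intro j hj
      push_cast [Nat.add_sub_cancel]
      ring
    have e2 : ∑ j ∈ Finset.range (n+3), ((j:ℝ)-1) * (cc n ((j:ℤ)-1) : ℝ) * t ^ j
        = ∑ j ∈ Finset.range (n+2), (cc n j : ℝ) * (j:ℝ) * t ^ (j+1) := by
      have z1 : ((cc n (((0:ℕ):ℤ)-1) : ℤ) : ℝ) = 0 := by
        rw [cc_zero _ _ (by omega)]; norm_num
      rw [Finset.sum_range_succ' (fun j => ((j:ℝ)-1) * (cc n ((j:ℤ)-1) : ℝ) * t ^ j) (n+2), z1]
      simp only [mul_zero, zero_mul, add_zero, Nat.cast_zero, mul_zero]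
      apply Finset.sum_congr rfl
      intro j hj
      push_cast [Nat.add_sub_cancel]
      ring
    have hc : ∀ j : ℕ, (cc (n+1) (j:ℤ) : ℝ)
        = ((j:ℝ)+1) * (cc n ((j:ℤ)+1) : ℝ) - ((j:ℝ)-1) * (cc n ((j:ℤ)-1) : ℝ) := by
      intro j
      rw [cc_succ]
      push_cast
      ring
    calc (∑ j ∈ Finset.range (n+2), (cc n j : ℝ) * ((j:ℝ) * t ^ (j-1) * (1 - t^2)))
        = (∑ j ∈ Finset.range (n+2), (cc n j : ℝ) * (j:ℝ) * t ^ (j-1))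
          - (∑ j ∈ Finset.range (n+2), (cc n j : ℝ) * (j:ℝ) * t ^ (j+1)) := by
          rw [← Finset.sum_sub_distrib]
          apply Finset.sum_congr rfl
          intro j hj
          rcases Nat.eq_zero_or_pos j with h0 | h0
          · subst h0; simp
          · have hjj : j - 1 + 2 = j + 1 := by omega
            rw [show t ^ (j+1) = t ^ (j-1) * t^2 by rw [← pow_add, hjj]]
            ring
      _ = ∑ j ∈ Finset.range (n+3), (cc (n+1) j : ℝ) * t ^ j := by
          rw [← e1, ← e2, ← Finset.sum_sub_distrib]
          apply Finset.sum_congr rfl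
          intro j hj
          rw [hc j]; ring

private lemma T_big (T : ℕ × ℕ → ℤ)
    (hT0 : ∀ k, T (0, k) = if k = 1 then 1 else 0)
    (hTnk : ∀ n k, 1 ≤ n → 1 ≤ k →
      T (n, k) = ((k : ℤ) - 1) * T (n - 1, k - 1) + ((k : ℤ) + 1) * T (n - 1, k + 1)) :
    ∀ n j, n + 2 ≤ j → T (n, j) = 0 := by
  intro n
  induction n with
  | zero => intro j hj; rw [hT0]; simp; omega
  | succ n ih =>
    intro j hj
    rw [hTnk (n+1) j (by omega) (by omega)]
    simp only [Nat.add_sub_cancel]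
    rw [ih (j-1) (by omega), ih (j+1) (by omega)]
    ring

private lemma T_eq_cc (T : ℕ × ℕ → ℤ)
    (hT0 : ∀ k, T (0, k) = if k = 1 then 1 else 0)
    (hTn0 : ∀ n, 1 ≤ n → T (n, 0) = T (n - 1, 1))
    (hTnk : ∀ n k, 1 ≤ n → 1 ≤ k →
      T (n, k) = ((k : ℤ) - 1) * T (n - 1, k - 1) + ((k : ℤ) + 1) * T (n - 1, k + 1)) :
    ∀ n k, 2 * k ≤ n + 1 → T (n, n + 1 - 2 * k) = (-1)^(n+k) * cc n ((n:ℤ) + 1 - 2*k) := by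
  intro n
  induction n with
  | zero =>
    intro k hk
    have : k = 0 := by omega
    subst this
    simp [hT0, cc]
  | succ n ih =>
    intro k hk
    by_cases hm : n + 2 - 2*k = 0
    · -- m = 0 case: 2k = n+2, k ≥ 1
      have hk2 : 2*k = n+2 := by omega
      obtain ⟨k', rfl⟩ : ∃ k', k = k' + 1 := ⟨k-1, by omega⟩
      have h1 : n + 1 + 1 - 2*(k'+1) = 0 := by omega
      rw [h1, hTn0 (n+1) (by omega)]
      simp only [Nat.add_sub_cancel]
      have h2 : n + 1 - 2*k' = 1 := by omega
      have := ih k' (by omega)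
      rw [h2] at this
      rw [this]
      have hz : ((n+1:ℕ):ℤ) + 1 - 2*((k'+1:ℕ):ℤ) = 0 := by push_cast; omega
      have hz2 : (n:ℤ) + 1 - 2*((k':ℕ):ℤ) = 1 := by push_cast; omega
      rw [hz, hz2, cc_succ]
      have hzz : cc n (-1) = 0 := cc_zero n _ (by omega)
      rw [show n+1+(k'+1) = n+k'+2 by omega, pow_succ, pow_succ]
      norm_num [hzz]
    · -- m ≥ 1
      have hm1 : 1 ≤ n + 2 - 2*k := by omega
      have hk1 : 2*k ≤ n + 1 := by omega
      have harg : n + 1 + 1 - 2*k = n + 2 - 2*k := by omega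
      rw [harg, hTnk (n+1) (n+2-2*k) (by omega) hm1]
      simp only [Nat.add_sub_cancel]
      have hsub1 : n + 2 - 2*k - 1 = n + 1 - 2*k := by omega
      have hsub2 : n + 2 - 2*k + 1 = n + 3 - 2*k := by omega
      rw [hsub1, hsub2]
      have IH1 := ih k hk1
      have IH2 : T (n, n + 3 - 2*k) = (-1)^(n+k+1) * cc n ((n:ℤ) + 3 - 2*k) := by
        rcases Nat.eq_zero_or_pos k with hk0 | hk0
        · subst hk0
          norm_num
          rw [T_big T hT0 hTnk n (n+3) (by omega), cc_zero n ((n:ℤ)+3) (by omega)]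
          ring
        · obtain ⟨k', rfl⟩ : ∃ k', k = k' + 1 := ⟨k-1, by omega⟩
          have h3 : n + 3 - 2*(k'+1) = n + 1 - 2*k' := by omega
          have h3' : (n:ℤ) + 3 - 2*((k'+1:ℕ):ℤ) = (n:ℤ) + 1 - 2*((k':ℕ):ℤ) := by
            push_cast; omega
          rw [h3, h3', ih k' (by omega)]
          rw [show n+(k'+1)+1 = n+k'+2 by omega, pow_succ, pow_succ]
          ring
      rw [IH1, IH2]
      have hcast : ((n + 2 - 2*k : ℕ) : ℤ) = (n:ℤ) + 2 - 2*k := by omega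
      rw [hcast]
      rw [show ((n+1:ℕ):ℤ) + 1 - 2*((k:ℕ):ℤ) = (n:ℤ)+2-2*(k:ℤ) by push_cast; ring]
      have hcc : cc (n+1) ((n:ℤ)+2-2*k) = ((n:ℤ)+2-2*k+1) * cc n ((n:ℤ)+2-2*k+1)
          - ((n:ℤ)+2-2*k-1) * cc n ((n:ℤ)+2-2*k-1) := cc_succ n _
      have ha1 : (n:ℤ)+2-2*k+1 = (n:ℤ)+3-2*k := by ring
      have ha2 : (n:ℤ)+2-2*k-1 = (n:ℤ)+1-2*k := by ring
      rw [ha1, ha2] at hcc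
      rw [hcc]
      rw [show n+1+k = n+k+1 by omega, pow_succ]
      ring

/-- Higher derivatives of the hyperbolic tangent function as polynomials in `tanh`, with the
tangent-polynomial coefficients `T` given by their recurrence. -/
theorem iteratedDeriv_tanh_eq_sum (T : ℕ × ℕ → ℤ)
    (hT0 : ∀ k, T (0, k) = if k = 1 then 1 else 0)
    (hTn0 : ∀ n, 1 ≤ n → T (n, 0) = T (n - 1, 1))
    (hTnk : ∀ n k, 1 ≤ n → 1 ≤ k →
      T (n, k) = ((k : ℤ) - 1) * T (n - 1, k - 1) + ((k : ℤ) + 1) * T (n - 1, k + 1))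
    (n : ℕ) (x : ℝ) :
    iteratedDeriv n Real.tanh x =
      (-1) ^ n * ∑ k ∈ Finset.range ((n + 1) / 2 + 1),
        (-1) ^ k * (T (n, n + 1 - 2 * k) : ℝ) * Real.tanh x ^ (n + 1 - 2 * k) := by
  rw [key_s16 n x]
  rw [Finset.mul_sum]
  set t := Real.tanh x with ht
  -- rewrite RHS terms using T_eq_cc
  have hterm : ∀ k ∈ Finset.range ((n + 1) / 2 + 1),
      (-1:ℝ) ^ n * ((-1) ^ k * (T (n, n + 1 - 2 * k) : ℝ) * t ^ (n + 1 - 2 * k))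
      = (cc n ((n:ℤ) + 1 - 2*k) : ℝ) * t ^ (n + 1 - 2 * k) := by
    intro k hk
    have hk' : 2*k ≤ n + 1 := by
      simp only [Finset.mem_range] at hk; omega
    have := T_eq_cc T hT0 hTn0 hTnk n k hk'
    rw [this]
    push_cast
    have h1 : ((-1:ℝ)^n) * ((-1)^n) = 1 := by
      rw [← pow_add, ← two_mul, pow_mul]; norm_num
    have h2 : ((-1:ℝ)^k) * ((-1)^k) = 1 := by
      rw [← pow_add, ← two_mul, pow_mul]; norm_num
    calc (-1:ℝ) ^ n * ((-1) ^ k * ((-1) ^ (n+k) * (cc n ((n:ℤ) + 1 - 2*k) : ℝ)) * t ^ (n + 1 - 2 * k))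
        = (((-1:ℝ)^n * (-1)^n) * ((-1)^k * (-1)^k)) * ((cc n ((n:ℤ) + 1 - 2*k) : ℝ) * t ^ (n + 1 - 2 * k)) := by
          rw [pow_add]; ring
      _ = (cc n ((n:ℤ) + 1 - 2*k) : ℝ) * t ^ (n + 1 - 2 * k) := by rw [h1, h2]; ring
  rw [Finset.sum_congr rfl hterm]
  -- now reindex: sum over j ∈ range (n+2) of cc n j * t^j = sum over k
  rw [← Finset.sum_filter_of_ne (p := fun j => j % 2 = (n+1) % 2)
    (f := fun j : ℕ => (cc n (j:ℤ) : ℝ) * t ^ j) (by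
      intro j hj hne
      by_contra hp
      apply hne
      show (cc n (j:ℤ) : ℝ) * t ^ j = 0
      rw [cc_parity n (j:ℤ) (by omega)]
      simp)]
  apply Finset.sum_nbij' (i := fun j => (n + 1 - j) / 2) (j := fun k => n + 1 - 2*k)
  · intro j hj
    simp only [Finset.mem_filter, Finset.mem_range] at hj
    simp only [Finset.mem_range]
    omega
  · intro k hk
    simp only [Finset.mem_range] at hk
    simp only [Finset.mem_filter, Finset.mem_range]
    omega
  · intro j hj
    simp only [Finset.mem_filter, Finset.mem_range] at hj
    omega
  · intro k hk
    simp only [Finset.mem_range] at hk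
    omega
  · intro j hj
    simp only [Finset.mem_filter, Finset.mem_range] at hj
    have hj2 : n + 1 - 2 * ((n+1-j)/2) = j := by omega
    have harg : (n:ℤ) + 1 - 2*(((n+1-j)/2 : ℕ) : ℤ) = (j:ℤ) := by omega
    rw [harg, hj2]
end

section
/- Let T : ℕ × ℕ → ℤ satisfy T(0,k) = 1 if k = 1 and T(0,k) = 0 otherwise; T(n,0) = T(n−1,1) for n ≥ 1; and T(n,k) = (k−1)·T(n−1,k−1) + (k+1)·T(n−1,k+1) for n ≥ 1, k ≥ 1. Then for every integer n ≥ 0 and every real number x ≠ 0, Dₓⁿ coth(x) = (−1)ⁿ · Σ_{k=0}^{⌊(n+1)/2⌋} (−1)ᵏ T(n, n−2k+1) · coth(x)^{n−2k+1}. -/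
/-- The real hyperbolic cotangent function, `coth x = cosh x / sinh x`. -/
noncomputable def coth (x : ℝ) : ℝ := Real.cosh x / Real.sinh x

lemma coth_hasDerivAt {x : ℝ} (hx : x ≠ 0) :
    HasDerivAt coth (1 - coth x ^ 2) x := by
  have hs : Real.sinh x ≠ 0 := Real.sinh_ne_zero.2 hx
  have h := (Real.hasDerivAt_cosh x).div (Real.hasDerivAt_sinh x) hs
  refine h.congr_deriv ?_
  unfold coth
  field_simp

lemma T_vanish (T : ℕ × ℕ → ℤ)
    (hT0 : ∀ k, T (0, k) = if k = 1 then 1 else 0)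
    (hTnk : ∀ n k, 1 ≤ n → 1 ≤ k →
      T (n, k) = ((k : ℤ) - 1) * T (n - 1, k - 1) + ((k : ℤ) + 1) * T (n - 1, k + 1)) :
    ∀ n k, n + 2 ≤ k → T (n, k) = 0 := by
  intro n
  induction n with
  | zero => intro k hk; rw [hT0, if_neg (by omega)]
  | succ n ih =>
    intro k hk
    rw [hTnk (n + 1) k (by omega) (by omega)]
    have h1 : T (n + 1 - 1, k - 1) = 0 := by
      simpa using ih (k - 1) (by omega)
    have h2 : T (n + 1 - 1, k + 1) = 0 := by
      simpa using ih (k + 1) (by omega)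
    rw [h1, h2]; ring

lemma key_s17 (T : ℕ × ℕ → ℤ)
    (hT0 : ∀ k, T (0, k) = if k = 1 then 1 else 0)
    (hTn0 : ∀ n, 1 ≤ n → T (n, 0) = T (n - 1, 1))
    (hTnk : ∀ n k, 1 ≤ n → 1 ≤ k →
      T (n, k) = ((k : ℤ) - 1) * T (n - 1, k - 1) + ((k : ℤ) + 1) * T (n - 1, k + 1))
    (n : ℕ) (c : ℝ) :
    ∑ k ∈ Finset.range ((n + 1) / 2 + 1),
      (-1 : ℝ) ^ k * (T (n, n + 1 - 2 * k) : ℝ) *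
        (((n + 1 - 2 * k : ℕ) : ℝ) * c ^ (n - 2 * k) * (1 - c ^ 2))
    = - ∑ k ∈ Finset.range ((n + 2) / 2 + 1),
        (-1 : ℝ) ^ k * (T (n + 1, n + 2 - 2 * k) : ℝ) * c ^ (n + 2 - 2 * k) := by
  set M := (n + 2) / 2 + 1 with hM
  set d : ℕ → ℝ := fun k => (-1 : ℝ) ^ k * (T (n, n + 1 - 2 * k) : ℝ) * ((n + 1 - 2 * k : ℕ) : ℝ)
    with hd
  -- extend first sum to range M
  have hAM : (n + 1) / 2 + 1 ≤ M := by omega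
  have hext : ∑ k ∈ Finset.range ((n + 1) / 2 + 1),
      (-1 : ℝ) ^ k * (T (n, n + 1 - 2 * k) : ℝ) *
        (((n + 1 - 2 * k : ℕ) : ℝ) * c ^ (n - 2 * k) * (1 - c ^ 2))
      = ∑ k ∈ Finset.range M,
      (-1 : ℝ) ^ k * (T (n, n + 1 - 2 * k) : ℝ) *
        (((n + 1 - 2 * k : ℕ) : ℝ) * c ^ (n - 2 * k) * (1 - c ^ 2)) := by
    apply Finset.sum_subset (Finset.range_subset_range.2 hAM)
    intro k _ hk
    simp only [Finset.mem_range, not_lt] at hk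
    have : n + 1 - 2 * k = 0 := by omega
    rw [this]
    simp
  rw [hext]
  -- split each term
  have hsplit : ∀ k ∈ Finset.range M,
      (-1 : ℝ) ^ k * (T (n, n + 1 - 2 * k) : ℝ) *
        (((n + 1 - 2 * k : ℕ) : ℝ) * c ^ (n - 2 * k) * (1 - c ^ 2))
      = d k * c ^ (n - 2 * k) - d k * c ^ (n + 2 - 2 * k) := by
    intro k hk
    simp only [Finset.mem_range] at hk
    rcases le_or_gt (2 * k) n with h | h
    · have he : n + 2 - 2 * k = n - 2 * k + 2 := by omega
      rw [he, hd]; ring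
    · have h0 : n + 1 - 2 * k = 0 := by omega
      simp only [hd, h0]
      simp
  rw [Finset.sum_congr rfl hsplit, Finset.sum_sub_distrib]
  -- reindex the first sum
  set R : ℕ → ℝ := fun k => if k = 0 then 0 else d (k - 1) * c ^ (n - 2 * (k - 1)) with hR
  have hre : ∑ k ∈ Finset.range M, d k * c ^ (n - 2 * k) = ∑ k ∈ Finset.range M, R k := by
    have hlast : ∀ m : ℕ, n + 1 - 2 * m = 0 → d m = 0 := by
      intro m hm; simp only [hd, hm]; simp
    rw [hM, Finset.sum_range_succ, Finset.sum_range_succ']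
    rw [hlast ((n + 2) / 2) (by omega)]
    simp only [hR]
    simp
  rw [hre, ← Finset.sum_sub_distrib]
  rw [← Finset.sum_neg_distrib]
  apply Finset.sum_congr rfl
  intro k hk
  simp only [Finset.mem_range] at hk
  rcases Nat.eq_zero_or_pos k with rfl | hk1
  · -- k = 0
    simp only [hR, if_pos rfl, hd, pow_zero, one_mul]
    have hrec := hTnk (n + 1) (n + 2) (by omega) (by omega)
    have hvan := T_vanish T hT0 hTnk n (n + 3) (by omega)
    simp only [Nat.add_sub_cancel] at hrec
    have h1 : n + 2 - 1 = n + 1 := by omega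
    rw [h1] at hrec
    have h2 : n + 1 + 1 - 1 = n + 1 := rfl
    rw [hvan] at hrec
    have h3 : n + 2 - 2 * 0 = n + 2 := by omega
    have h4 : n + 1 - 2 * 0 = n + 1 := by omega
    rw [h3, h4, hrec]
    push_cast
    ring
  · rcases le_or_gt (2 * k) (n + 1) with h | h
    · -- j = n + 2 - 2k ≥ 1
      have hj1 : 1 ≤ n + 2 - 2 * k := by omega
      have hrec := hTnk (n + 1) (n + 2 - 2 * k) (by omega) hj1
      have e1 : n + 2 - 2 * k - 1 = n + 1 - 2 * k := by omega
      have e2 : n + 2 - 2 * k + 1 = n + 3 - 2 * k := by omega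
      have e3 : n + 1 + 1 - 1 = n + 1 := rfl
      rw [e1, e2] at hrec
      simp only [Nat.add_sub_cancel] at hrec
      have hR' : R k = d (k - 1) * c ^ (n + 2 - 2 * k) := by
        rw [hR]
        simp only [if_neg (by omega : ¬ k = 0)]
        congr 2
        omega
      rw [hR']
      simp only [hd]
      have e4 : n + 1 - 2 * (k - 1) = n + 3 - 2 * k := by omega
      rw [e4]
      have e5 : (-1 : ℝ) ^ k = (-1 : ℝ) ^ (k - 1) * (-1) := by
        rw [← pow_succ]; congr 1; omega
      rw [e5, hrec]
      have c1 : ((n + 2 - 2 * k : ℕ) : ℤ) - 1 = ((n + 1 - 2 * k : ℕ) : ℤ) := by omega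
      have c2 : ((n + 2 - 2 * k : ℕ) : ℤ) + 1 = ((n + 3 - 2 * k : ℕ) : ℤ) := by omega
      rw [c1, c2]
      push_cast
      ring
    · -- 2k = n + 2, j = 0
      have h2k : 2 * k = n + 2 := by omega
      have hj0 : n + 2 - 2 * k = 0 := by omega
      have hd0 : d k = 0 := by
        have : n + 1 - 2 * k = 0 := by omega
        rw [hd]; simp only [this]; simp
      have hR' : R k = d (k - 1) * c ^ (0 : ℕ) := by
        rw [hR]
        simp only [if_neg (by omega : ¬ k = 0)]
        congr 2
        omega
      rw [hR', hd0, hj0]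
      simp only [hd]
      have e4 : n + 1 - 2 * (k - 1) = 1 := by omega
      rw [e4]
      have hrec := hTn0 (n + 1) (by omega)
      simp only [Nat.add_sub_cancel] at hrec
      rw [hrec]
      have e5 : (-1 : ℝ) ^ k = (-1 : ℝ) ^ (k - 1) * (-1) := by
        rw [← pow_succ]; congr 1; omega
      rw [e5]
      push_cast
      ring

/-- Higher derivatives of the hyperbolic cotangent function as polynomials in `coth`, with the
tangent-polynomial coefficients `T` given by their recurrence. -/
theorem iteratedDeriv_coth_eq_sum (T : ℕ × ℕ → ℤ)
    (hT0 : ∀ k, T (0, k) = if k = 1 then 1 else 0)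
    (hTn0 : ∀ n, 1 ≤ n → T (n, 0) = T (n - 1, 1))
    (hTnk : ∀ n k, 1 ≤ n → 1 ≤ k →
      T (n, k) = ((k : ℤ) - 1) * T (n - 1, k - 1) + ((k : ℤ) + 1) * T (n - 1, k + 1))
    (n : ℕ) (x : ℝ) (hx : x ≠ 0) :
    iteratedDeriv n coth x =
      (-1) ^ n * ∑ k ∈ Finset.range ((n + 1) / 2 + 1),
        (-1) ^ k * (T (n, n + 1 - 2 * k) : ℝ) * coth x ^ (n + 1 - 2 * k) := by
  induction n generalizing x with
  | zero =>
    simp [hT0]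
  | succ n ih =>
    rw [iteratedDeriv_succ]
    have hev : iteratedDeriv n coth =ᶠ[nhds x]
        fun y => (-1 : ℝ) ^ n * ∑ k ∈ Finset.range ((n + 1) / 2 + 1),
          (-1) ^ k * (T (n, n + 1 - 2 * k) : ℝ) * coth y ^ (n + 1 - 2 * k) := by
      filter_upwards [isOpen_ne.mem_nhds hx] with y hy
      exact ih y hy
    rw [hev.deriv_eq]
    have hder : HasDerivAt
        (fun y => (-1 : ℝ) ^ n * ∑ k ∈ Finset.range ((n + 1) / 2 + 1),
          (-1) ^ k * (T (n, n + 1 - 2 * k) : ℝ) * coth y ^ (n + 1 - 2 * k))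
        ((-1 : ℝ) ^ n * ∑ k ∈ Finset.range ((n + 1) / 2 + 1),
          (-1) ^ k * (T (n, n + 1 - 2 * k) : ℝ) *
            (((n + 1 - 2 * k : ℕ) : ℝ) * coth x ^ (n + 1 - 2 * k - 1) * (1 - coth x ^ 2))) x := by
      apply HasDerivAt.const_mul
      apply HasDerivAt.fun_sum
      intro k hk
      exact ((coth_hasDerivAt hx).pow _).const_mul _
    rw [hder.deriv]
    have hexp : ∀ k, n + 1 - 2 * k - 1 = n - 2 * k := by intro k; omega
    simp only [hexp]
    rw [key_s17 T hT0 hTn0 hTnk n (coth x)]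
    have hr : (n + 1 + 1) / 2 + 1 = (n + 2) / 2 + 1 := rfl
    have he : ∀ k, n + 1 + 1 - 2 * k = n + 2 - 2 * k := fun k => rfl
    rw [pow_succ]
    ring
end
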